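/- For all symmetric probability measures x1, x2, x3, x4 ∈ X, H((x1 − x2) ⊛ (x3 − x4)) + H((x1 − x2) ⊠ (x3 − x4)) = 0, where the operations and H are extended bilinearly and linearly to signed measures. -/

import Mathlib

open MeasureTheory Real Filter Topology Polynomial

noncomputable section

/-- The space of finite signed Borel measures on the extended reals `ℝ̄`. -/
abbrev SM := MeasureTheory.SignedMeasure EReal

namespace SCLDPC

/-- The weight `e^{-α/2}` as an extended nonnegative real (`+∞` at `α = -∞`). -/
def wt (α : EReal) : ENNReal :=
  if α = ⊥ then ⊤ else if α = ⊤ then 0 else ENNReal.ofReal (Real.exp (-(α.toReal) / 2))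

/-- A (nonnegative) Borel measure `μ` on `ℝ̄` is symmetric if
`∫_{-E} e^{-α/2} μ(dα) = ∫_{E} e^{-α/2} μ(dα)` for every Borel set `E`
(stated with extended nonnegative integrals, which is equivalent to requiring
equality whenever one of the two sides is finite). -/
def IsSymmMeasure (μ : Measure EReal) : Prop :=
  ∀ E : Set EReal, MeasurableSet E →
    ∫⁻ α in (fun a : EReal => -a) ⁻¹' E, wt α ∂μ = ∫⁻ α in E, wt α ∂μ

/-- Positive part of the Jordan decomposition. -/
def jp (x : SM) : Measure EReal := x.toJordanDecomposition.posPart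

/-- Negative part of the Jordan decomposition. -/
def jn (x : SM) : Measure EReal := x.toJordanDecomposition.negPart

instance (x : SM) : IsFiniteMeasure (jp x) := x.toJordanDecomposition.posPart_finite

instance (x : SM) : IsFiniteMeasure (jn x) := x.toJordanDecomposition.negPart_finite

/-- A finite signed Borel measure on `ℝ̄` is symmetric iff both parts of its Jordan
decomposition are symmetric measures. -/
def IsSymm (x : SM) : Prop := IsSymmMeasure (jp x) ∧ IsSymmMeasure (jn x)

/-- Membership in `X`, the set of symmetric probability measures on `ℝ̄`. -/
def MemX (x : SM) : Prop :=
  (∃ (μ : Measure EReal) (hμ : IsProbabilityMeasure μ),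
      x = (letI := hμ; μ.toSignedMeasure)) ∧ IsSymm x

/-- Membership in `X_d`, the set of differences of symmetric probability measures. -/
def MemXd (y : SM) : Prop := ∃ x1 x2 : SM, MemX x1 ∧ MemX x2 ∧ y = x1 - x2

/-- Integral of a real function against a finite signed measure. -/
def sInt (f : EReal → ℝ) (x : SM) : ℝ := (∫ α, f α ∂(jp x)) - ∫ α, f α ∂(jn x)

/-- `tanh(α/2)` extended continuously to `ℝ̄`. -/
def tanhHalf (α : EReal) : ℝ :=
  if α = ⊤ then 1 else if α = ⊥ then -1 else Real.tanh (α.toReal / 2)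

/-- The inverse hyperbolic tangent on `(-1, 1)`. -/
def artanh (t : ℝ) : ℝ := Real.log ((1 + t) / (1 - t)) / 2

/-- `2 tanh⁻¹(t)` valued in `ℝ̄` (sending `t ≥ 1` to `+∞` and `t ≤ -1` to `-∞`). -/
def atanhTwo (t : ℝ) : EReal :=
  if 1 ≤ t then ⊤ else if t ≤ -1 then ⊥ else ((2 * artanh t : ℝ) : EReal)

/-- Variable-node convolution `⊛` of two (nonnegative) measures:
`(μ ⊛ ν)(E) = ∫ μ(E - α) ν(dα)`, i.e. the pushforward of `μ × ν` under addition. -/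
def mConv (μ ν : Measure EReal) : Measure EReal :=
  (μ.prod ν).map fun p => p.1 + p.2

/-- Check-node convolution `⊠` of two (nonnegative) measures:
`(μ ⊠ ν)(E) = ∫ μ(2 tanh⁻¹(tanh(E/2) / tanh(α/2))) ν(dα)`, where the argument of `μ`
is the image of `E` under `β ↦ 2 tanh⁻¹(tanh(β/2) / tanh(α/2))`; equivalently, the
pushforward of `μ × ν` under `(β, α) ↦ 2 tanh⁻¹(tanh(β/2) · tanh(α/2))`. -/
def mCheck (μ ν : Measure EReal) : Measure EReal :=
  (μ.prod ν).map fun p => atanhTwo (tanhHalf p.1 * tanhHalf p.2)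

instance (μ ν : Measure EReal) [IsFiniteMeasure μ] [IsFiniteMeasure ν] :
    IsFiniteMeasure (mConv μ ν) := by unfold mConv; infer_instance

instance (μ ν : Measure EReal) [IsFiniteMeasure μ] [IsFiniteMeasure ν] :
    IsFiniteMeasure (mCheck μ ν) := by unfold mCheck; infer_instance

/-- The variable-node operation `⊛` extended bilinearly to finite signed measures. -/
def sConv (x y : SM) : SM :=
  (mConv (jp x) (jp y)).toSignedMeasure - (mConv (jp x) (jn y)).toSignedMeasure
    - (mConv (jn x) (jp y)).toSignedMeasure + (mConv (jn x) (jn y)).toSignedMeasure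

/-- The check-node operation `⊠` extended bilinearly to finite signed measures. -/
def sCheck (x y : SM) : SM :=
  (mCheck (jp x) (jp y)).toSignedMeasure - (mCheck (jp x) (jn y)).toSignedMeasure
    - (mCheck (jn x) (jp y)).toSignedMeasure + (mCheck (jn x) (jn y)).toSignedMeasure

/-- The integrand `log₂(1 + e^{-α})` of the entropy functional (with the harmless
convention that it vanishes at `α = ±∞`; symmetric measures put no mass at `-∞`). -/
def entFn (α : EReal) : ℝ :=
  if α = ⊤ then 0 else if α = ⊥ then 0 else Real.logb 2 (1 + Real.exp (-(α.toReal)))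

/-- The entropy functional `H(x) = ∫ log₂(1 + e^{-α}) x(dα)`. -/
def H (x : SM) : ℝ := sInt entFn x


-- ===== Auxiliary lemmas =====
-- Section 1: measurability and positivity
lemma entFn_nonneg (α : EReal) : 0 ≤ entFn α := by
  unfold entFn
  split_ifs with h1 h2
  · exact le_refl 0
  · exact le_refl 0
  · exact Real.logb_nonneg (by norm_num) (by nlinarith [Real.exp_pos (-(α.toReal))])

lemma measurable_entFn : Measurable entFn := by
  unfold entFn
  apply Measurable.ite (MeasurableSet.singleton ⊤) measurable_const
  apply Measurable.ite (MeasurableSet.singleton ⊥) measurable_const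
  have : (fun α : EReal => Real.logb 2 (1 + Real.exp (-(α.toReal)))) =
      fun α : EReal => Real.log (1 + Real.exp (-(α.toReal))) / Real.log 2 := by
    funext α; rw [Real.logb]
  rw [this]
  exact (Real.measurable_log.comp (by fun_prop)).div_const _

lemma measurable_wt : Measurable wt := by
  unfold wt
  apply Measurable.ite (MeasurableSet.singleton ⊥) measurable_const
  apply Measurable.ite (MeasurableSet.singleton ⊤) measurable_const
  fun_prop

lemma measurable_tanhHalf : Measurable tanhHalf := by
  unfold tanhHalf
  apply Measurable.ite (MeasurableSet.singleton ⊤) measurable_const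
  apply Measurable.ite (MeasurableSet.singleton ⊥) measurable_const
  have : (fun α : EReal => Real.tanh (α.toReal / 2)) =
      fun α : EReal => Real.sinh (α.toReal / 2) / Real.cosh (α.toReal / 2) := by
    funext α; rw [Real.tanh_eq_sinh_div_cosh]
  rw [this]
  exact ((Real.continuous_sinh.measurable.comp (by fun_prop)).div
    (Real.continuous_cosh.measurable.comp (by fun_prop)))

lemma measurable_artanh : Measurable artanh := by
  unfold artanh
  exact (Real.measurable_log.comp ((measurable_const.add measurable_id).div
    (measurable_const.sub measurable_id))).div_const _

lemma measurable_atanhTwo : Measurable atanhTwo := by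
  unfold atanhTwo
  apply Measurable.ite (measurableSet_le measurable_const measurable_id) measurable_const
  apply Measurable.ite (measurableSet_le measurable_id measurable_const) measurable_const
  exact (measurable_coe_real_ereal).comp (measurable_const.mul measurable_artanh)

lemma measurable_add2 : Measurable (fun p : EReal × EReal => p.1 + p.2) := by
  have h : (fun p : EReal × EReal => p.1 + p.2) = fun p =>
      if p.1 = ⊥ then ⊥ else if p.2 = ⊥ then ⊥ else if p.1 = ⊤ then ⊤ else if p.2 = ⊤ then ⊤
      else ((p.1.toReal + p.2.toReal : ℝ) : EReal) := by
    funext p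
    rcases p with ⟨a, b⟩
    induction a using EReal.rec <;> induction b using EReal.rec <;>
      simp [EReal.bot_add, EReal.add_bot, EReal.top_add_coe, EReal.coe_add_top,
        EReal.top_add_top, ← EReal.coe_add]
  rw [h]
  apply Measurable.ite (measurable_fst (MeasurableSet.singleton ⊥)) measurable_const
  apply Measurable.ite (measurable_snd (MeasurableSet.singleton ⊥)) measurable_const
  apply Measurable.ite (measurable_fst (MeasurableSet.singleton ⊤)) measurable_const
  apply Measurable.ite (measurable_snd (MeasurableSet.singleton ⊤)) measurable_const
  exact measurable_coe_real_ereal.comp (by fun_prop)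

lemma measurable_check2 : Measurable (fun p : EReal × EReal => atanhTwo (tanhHalf p.1 * tanhHalf p.2)) := by
  apply measurable_atanhTwo.comp
  exact (measurable_tanhHalf.comp measurable_fst).mul (measurable_tanhHalf.comp measurable_snd)

-- Section 2: the pointwise identity
lemma tanh_half_exp (x : ℝ) :
    Real.tanh (x / 2) = (1 - Real.exp (-x)) / (1 + Real.exp (-x)) := by
  have hs : Real.exp (-x) = (Real.exp (x / 2))⁻¹ * (Real.exp (x / 2))⁻¹ := by
    rw [← Real.exp_neg, ← Real.exp_add]; ring_nf
  have hneg : Real.exp (-(x / 2)) = (Real.exp (x / 2))⁻¹ := by rw [Real.exp_neg]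
  rw [Real.tanh_eq_sinh_div_cosh, Real.sinh_eq, Real.cosh_eq, hneg, hs]
  have h := Real.exp_ne_zero (x / 2)
  have h2 : (0:ℝ) < Real.exp (x/2) := Real.exp_pos _
  have h3 : 0 < 1 + (Real.exp (x / 2))⁻¹ * (Real.exp (x / 2))⁻¹ := by positivity
  field_simp

lemma tanh_half_lt_one (x : ℝ) : Real.tanh (x / 2) < 1 := by
  rw [tanh_half_exp]
  have h := Real.exp_pos (-x)
  rw [div_lt_one (by linarith)]; linarith

lemma neg_one_lt_tanh_half (x : ℝ) : -1 < Real.tanh (x / 2) := by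
  rw [tanh_half_exp]
  have h := Real.exp_pos (-x)
  rw [lt_div_iff₀ (by linarith)]; linarith

lemma entFn_coe (r : ℝ) : entFn (r : EReal) = Real.logb 2 (1 + Real.exp (-r)) := by
  unfold entFn
  rw [if_neg (EReal.coe_ne_top r), if_neg (EReal.coe_ne_bot r), EReal.toReal_coe]

lemma tanhHalf_coe (r : ℝ) : tanhHalf (r : EReal) = Real.tanh (r / 2) := by
  unfold tanhHalf
  rw [if_neg (EReal.coe_ne_top r), if_neg (EReal.coe_ne_bot r), EReal.toReal_coe]

lemma exp_neg_two_artanh {t : ℝ} (h1 : -1 < t) (h2 : t < 1) :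
    Real.exp (-(2 * artanh t)) = (1 - t) / (1 + t) := by
  unfold artanh
  have h3 : 0 < 1 + t := by linarith
  have h4 : 0 < 1 - t := by linarith
  have h5 : 0 < (1 + t) / (1 - t) := by positivity
  rw [show -(2 * (Real.log ((1 + t) / (1 - t)) / 2)) = -Real.log ((1+t)/(1-t)) by ring,
    Real.exp_neg, Real.exp_log h5, inv_div]

lemma entFn_atanhTwo {t : ℝ} (h1 : -1 < t) (h2 : t < 1) :
    entFn (atanhTwo t) = Real.logb 2 (1 + (1 - t) / (1 + t)) := by
  unfold atanhTwo
  rw [if_neg (by linarith), if_neg (by linarith), entFn_coe, exp_neg_two_artanh h1 h2]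

/-- The central algebraic identity, real case. -/
lemma key_identity_coe (a b : ℝ) :
    entFn ((a : EReal) + (b : EReal)) + entFn (atanhTwo (tanhHalf a * tanhHalf b)) =
      entFn (a : EReal) + entFn (b : EReal) := by
  rw [← EReal.coe_add, entFn_coe, entFn_coe, entFn_coe, tanhHalf_coe, tanhHalf_coe]
  set u := Real.exp (-a) with hu
  set v := Real.exp (-b) with hv
  have hu0 : 0 < u := Real.exp_pos _
  have hv0 : 0 < v := Real.exp_pos _
  have huv : Real.exp (-(a + b)) = u * v := by rw [hu, hv, ← Real.exp_add]; ring_nf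
  have ht1 : -1 < Real.tanh (a/2) * Real.tanh (b/2) := by
    nlinarith [tanh_half_lt_one a, tanh_half_lt_one b, neg_one_lt_tanh_half a,
      neg_one_lt_tanh_half b]
  have ht2 : Real.tanh (a/2) * Real.tanh (b/2) < 1 := by
    nlinarith [tanh_half_lt_one a, tanh_half_lt_one b, neg_one_lt_tanh_half a,
      neg_one_lt_tanh_half b]
  rw [entFn_atanhTwo ht1 ht2, huv]
  set t := Real.tanh (a/2) * Real.tanh (b/2) with htdef
  have h1t : 0 < 1 + t := by linarith
  have h2t : 0 < 1 - t := by linarith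
  have hx : (0:ℝ) < 1 + u * v := by positivity
  have hy : 0 < 1 + (1 - t) / (1 + t) := by positivity
  have hm : (1 + u * v) * (1 + (1 - t) / (1 + t)) = (1 + u) * (1 + v) := by
    have hteq : t = ((1 - u) / (1 + u)) * ((1 - v) / (1 + v)) := by
      rw [htdef, tanh_half_exp, tanh_half_exp, hu, hv]
    rw [hteq]
    have h1u : (0:ℝ) < 1 + u := by linarith
    have h1v : (0:ℝ) < 1 + v := by linarith
    have hne : 1 + (1 - u) / (1 + u) * ((1 - v) / (1 + v)) ≠ 0 := by
      rw [hteq] at h1t; linarith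
    have h2uv : (2 + u * v * 2:ℝ) ≠ 0 := by positivity
    have hk : (2 + u * v * 2) * (2 + u * v * 2)⁻¹ = (1:ℝ) := mul_inv_cancel₀ h2uv
    field_simp
    linear_combination (u + v) * hk
  rw [← Real.logb_mul (by positivity) (by positivity), hm,
    Real.logb_mul (by positivity) (by positivity)]

lemma entFn_top : entFn ⊤ = 0 := by unfold entFn; simp

lemma key_identity_top (β : EReal) (hβ : β ≠ ⊥) :
    entFn ((⊤ : EReal) + β) + entFn (atanhTwo (tanhHalf ⊤ * tanhHalf β)) =
      entFn (⊤ : EReal) + entFn β := by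
  have htop : tanhHalf ⊤ = 1 := by unfold tanhHalf; simp
  induction β using EReal.rec with
  | bot => exact absurd rfl hβ
  | top =>
    rw [EReal.top_add_top, htop, entFn_top, show (1:ℝ) * 1 = 1 by ring,
      show atanhTwo 1 = ⊤ by unfold atanhTwo; simp, entFn_top]
  | coe b =>
    rw [EReal.top_add_coe, entFn_top, htop, one_mul, tanhHalf_coe]
    have h1 : -1 < Real.tanh (b/2) := neg_one_lt_tanh_half b
    have h2 : Real.tanh (b/2) < 1 := tanh_half_lt_one b
    have hv0 : 0 < Real.exp (-b) := Real.exp_pos _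
    unfold atanhTwo
    rw [if_neg (by linarith), if_neg (by linarith)]
    have hart : 2 * artanh (Real.tanh (b/2)) = b := by
      unfold artanh
      rw [tanh_half_exp]
      have hd : (1 + (1 - Real.exp (-b)) / (1 + Real.exp (-b))) /
          (1 - (1 - Real.exp (-b)) / (1 + Real.exp (-b))) = (Real.exp (-b))⁻¹ := by
        rw [div_eq_iff]
        · field_simp
          ring
        · intro hc
          have : (1:ℝ) - (1 - Real.exp (-b)) / (1 + Real.exp (-b)) =
              (2 * Real.exp (-b)) / (1 + Real.exp (-b)) := by field_simp; ring
          rw [this] at hc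
          have := div_eq_zero_iff.mp hc
          rcases this with h | h <;> linarith
      rw [hd, ← Real.exp_neg, Real.log_exp]
      ring
    rw [hart, entFn_coe]

/-- The central pointwise identity on `ℝ̄ \ {-∞}`. -/
lemma key_identity {α β : EReal} (hα : α ≠ ⊥) (hβ : β ≠ ⊥) :
    entFn (α + β) + entFn (atanhTwo (tanhHalf α * tanhHalf β)) = entFn α + entFn β := by
  induction α using EReal.rec with
  | bot => exact absurd rfl hα
  | top => exact key_identity_top β hβ
  | coe a =>
    induction β using EReal.rec with
    | bot => exact absurd rfl hβ
    | top =>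
      rw [add_comm (a : EReal) ⊤, mul_comm (tanhHalf (a : EReal)) (tanhHalf ⊤),
        add_comm (entFn (a : EReal)) (entFn ⊤)]
      exact key_identity_top _ (EReal.coe_ne_bot a)
    | coe b => exact key_identity_coe a b

-- Section 3: bounds and integrability
lemma entFn_ofReal_le (α : EReal) : ENNReal.ofReal (entFn α) ≤ 2 + 4 * wt α := by
  induction α using EReal.rec with
  | bot => unfold entFn; simp
  | top => unfold entFn; simp
  | coe a =>
    rw [entFn_coe]
    have hwt : wt (a : EReal) = ENNReal.ofReal (Real.exp (-a / 2)) := by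
      unfold wt
      rw [if_neg (EReal.coe_ne_bot a), if_neg (EReal.coe_ne_top a), EReal.toReal_coe]
    rw [hwt]
    have hs : Real.exp (-a) = Real.exp (-a / 2) * Real.exp (-a / 2) := by
      rw [← Real.exp_add]; ring_nf
    have hse : (0:ℝ) < Real.exp (-a / 2) := Real.exp_pos _
    have hb : Real.logb 2 (1 + Real.exp (-a)) ≤ 2 + 4 * Real.exp (-a / 2) := by
      have hlog2 : (0.6931471803 : ℝ) < Real.log 2 := Real.log_two_gt_d9
      have h1 : Real.log (1 + Real.exp (-a)) ≤
          Real.log ((1 + Real.exp (-a / 2)) ^ 2) := by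
        apply Real.log_le_log (by nlinarith)
        nlinarith
      rw [Real.log_pow] at h1
      have h2 : Real.log (1 + Real.exp (-a / 2)) ≤ Real.exp (-a / 2) := by
        have := Real.log_le_sub_one_of_pos (show (0:ℝ) < 1 + Real.exp (-a/2) by linarith)
        linarith
      have h3 : Real.log (1 + Real.exp (-a)) ≤ 2 * Real.exp (-a / 2) := by
        push_cast at h1; linarith
      rw [Real.logb, div_le_iff₀ (by linarith)]
      nlinarith [Real.exp_pos (-a), Real.log_nonneg (show (1:ℝ) ≤ 1 + Real.exp (-a) by nlinarith)]
    calc ENNReal.ofReal (Real.logb 2 (1 + Real.exp (-a)))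
        ≤ ENNReal.ofReal (2 + 4 * Real.exp (-a / 2)) := ENNReal.ofReal_le_ofReal hb
      _ = ENNReal.ofReal 2 + ENNReal.ofReal (4 * Real.exp (-a / 2)) := by
          rw [ENNReal.ofReal_add (by norm_num) (by positivity)]
      _ = 2 + 4 * ENNReal.ofReal (Real.exp (-a / 2)) := by
          rw [ENNReal.ofReal_mul (by norm_num)]
          norm_num

-- Section 4: symmetric measures
lemma wt_le_one_of_nonneg {α : EReal} (h : 0 ≤ α) : wt α ≤ 1 := by
  induction α using EReal.rec with
  | bot => exact absurd h (by simp)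
  | top => unfold wt; simp
  | coe a =>
    unfold wt
    rw [if_neg (EReal.coe_ne_bot a), if_neg (EReal.coe_ne_top a), EReal.toReal_coe]
    have ha : 0 ≤ a := by exact_mod_cast h
    rw [show (1:ENNReal) = ENNReal.ofReal 1 by simp]
    exact ENNReal.ofReal_le_ofReal (Real.exp_le_one_iff.mpr (by linarith))

lemma symm_wt_lt_top {μ : Measure EReal} [IsFiniteMeasure μ] (hμ : IsSymmMeasure μ) :
    ∫⁻ α, wt α ∂μ < ⊤ := by
  have hIoi : ∫⁻ α in Set.Ici (0:EReal), wt α ∂μ ≤ μ (Set.Ici 0) := by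
    rw [← setLIntegral_one]
    exact setLIntegral_mono' measurableSet_Ici (fun α hα => wt_le_one_of_nonneg hα)
  have hpre : (fun a : EReal => -a) ⁻¹' (Set.Ioi 0) = Set.Iio 0 := by
    ext a
    simp only [Set.mem_preimage, Set.mem_Ioi, Set.mem_Iio]
    constructor
    · intro hlt
      rw [show (0:EReal) = -(0:EReal) by simp] at hlt
      exact EReal.neg_lt_neg_iff.mp hlt
    · intro hlt
      rw [show (0:EReal) = -(0:EReal) by simp]
      exact EReal.neg_lt_neg_iff.mpr hlt
  have hneg : ∫⁻ α in Set.Iio (0:EReal), wt α ∂μ ≤ μ (Set.Ioi 0) := by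
    rw [← hpre, hμ (Set.Ioi 0) measurableSet_Ioi, ← setLIntegral_one]
    exact setLIntegral_mono' measurableSet_Ioi (fun α hα => wt_le_one_of_nonneg (le_of_lt hα))
  have hsplit : ∫⁻ α, wt α ∂μ = ∫⁻ α in Set.Iio (0:EReal), wt α ∂μ +
      ∫⁻ α in Set.Ici (0:EReal), wt α ∂μ := by
    rw [← lintegral_add_compl (wt) (measurableSet_Iio (a := (0:EReal)))]
    congr 1
    rw [show (Set.Iio (0:EReal))ᶜ = Set.Ici 0 from Set.compl_Iio]
  rw [hsplit]
  exact ENNReal.add_lt_top.mpr ⟨lt_of_le_of_lt hneg (measure_lt_top μ _),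
    lt_of_le_of_lt hIoi (measure_lt_top μ _)⟩

lemma bot_eq_zero_of_wt_lt_top {μ : Measure EReal} (h : ∫⁻ α, wt α ∂μ < ⊤) :
    μ {⊥} = 0 := by
  by_contra hne
  have hb : ∫⁻ α in {(⊥ : EReal)}, wt α ∂μ ≤ ∫⁻ α, wt α ∂μ :=
    setLIntegral_le_lintegral _ _
  rw [lintegral_singleton] at hb
  have hwb : wt ⊥ = ⊤ := by unfold wt; simp
  rw [hwb, ENNReal.top_mul hne] at hb
  exact absurd (eq_top_iff.mpr hb) (ne_of_lt h)

lemma entFn_integrable_of_wt {μ : Measure EReal} [IsFiniteMeasure μ]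
    (h : ∫⁻ α, wt α ∂μ < ⊤) : Integrable entFn μ := by
  refine ⟨measurable_entFn.aestronglyMeasurable, ?_⟩
  rw [HasFiniteIntegral]
  calc ∫⁻ α, ‖entFn α‖₊ ∂μ = ∫⁻ α, ENNReal.ofReal (entFn α) ∂μ := by
        congr 1; funext α; exact Real.enorm_eq_ofReal (entFn_nonneg α)
    _ ≤ ∫⁻ α, (2 + 4 * wt α) ∂μ := lintegral_mono entFn_ofReal_le
    _ = 2 * μ Set.univ + 4 * ∫⁻ α, wt α ∂μ := by
        rw [lintegral_add_left measurable_const, lintegral_const,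
          lintegral_const_mul _ measurable_wt]
    _ < ⊤ := by
        refine ENNReal.add_lt_top.mpr ⟨?_, ?_⟩
        · exact ENNReal.mul_lt_top (by norm_num) (measure_lt_top μ _)
        · exact ENNReal.mul_lt_top (by norm_num) h

-- Section 5: Jordan decomposition facts
lemma toSM_measure_inj {a b : Measure EReal} [IsFiniteMeasure a] [IsFiniteMeasure b]
    (h : a.toSignedMeasure = b.toSignedMeasure) : a = b := by
  ext s hs
  have hv : a.toSignedMeasure s = b.toSignedMeasure s := by rw [h]
  rw [show a.toSignedMeasure s = (a s).toReal from Measure.toSignedMeasure_apply_measurable hs,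
    show b.toSignedMeasure s = (b s).toReal from Measure.toSignedMeasure_apply_measurable hs] at hv
  exact (ENNReal.toReal_eq_toReal_iff' (measure_ne_top a s) (measure_ne_top b s)).mp hv

lemma jordan_of_toSM (μ : Measure EReal) [IsFiniteMeasure μ] :
    jp μ.toSignedMeasure = μ ∧ jn μ.toSignedMeasure = 0 := by
  have hJ : μ.toSignedMeasure.toJordanDecomposition =
      MeasureTheory.JordanDecomposition.mk μ 0 Measure.MutuallySingular.zero_right := by
    apply MeasureTheory.SignedMeasure.toJordanDecomposition_eq
    show μ.toSignedMeasure = _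
    rw [MeasureTheory.JordanDecomposition.toSignedMeasure]
    simp [Measure.toSignedMeasure_zero]
  constructor
  · show μ.toSignedMeasure.toJordanDecomposition.posPart = μ
    rw [hJ]
  · show μ.toSignedMeasure.toJordanDecomposition.negPart = 0
    rw [hJ]

lemma measure_add_eq {a b p n : Measure EReal} [IsFiniteMeasure a] [IsFiniteMeasure b]
    [IsFiniteMeasure p] [IsFiniteMeasure n]
    (h : a.toSignedMeasure - b.toSignedMeasure = p.toSignedMeasure - n.toSignedMeasure) :
    a + n = p + b := by
  apply toSM_measure_inj
  rw [Measure.toSignedMeasure_add, Measure.toSignedMeasure_add]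
  have : a.toSignedMeasure + n.toSignedMeasure =
      p.toSignedMeasure + b.toSignedMeasure := by
    have := h
    abel_nf at this ⊢
    linear_combination (norm := abel_nf) this
  exact this

lemma le_of_add_eq_add {p n a b : Measure EReal} (hpn : p ⟂ₘ n)
    (h : p + b = a + n) : p ≤ a := by
  obtain ⟨u, hum, hpu, hnu⟩ := hpn
  intro E
  have h1 : p E = p (E \ u) := by
    have hsplit := measure_inter_add_diff (μ := p) E hum
    have h0 : p (E ∩ u) = 0 := measure_mono_null Set.inter_subset_right hpu
    rw [h0, zero_add] at hsplit
    exact hsplit.symm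
  have h2 : n (E \ u) = 0 := measure_mono_null (fun x hx => hx.2) hnu
  have h3 : p (E \ u) ≤ a (E \ u) := by
    calc p (E \ u) ≤ p (E \ u) + b (E \ u) := le_self_add
      _ = (p + b) (E \ u) := (Measure.add_apply _ _ _).symm
      _ = (a + n) (E \ u) := by rw [h]
      _ = a (E \ u) + n (E \ u) := Measure.add_apply _ _ _
      _ = a (E \ u) := by rw [h2, add_zero]
  calc p E = p (E \ u) := h1
    _ ≤ a (E \ u) := h3
    _ ≤ a E := measure_mono Set.diff_subset

-- Section 6: representation of sInt
lemma jordan_repr (x : SM) :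
    x = (jp x).toSignedMeasure - (jn x).toSignedMeasure := by
  conv_lhs => rw [← x.toSignedMeasure_toJordanDecomposition]
  rfl

lemma jordan_le {a b : Measure EReal} [IsFiniteMeasure a] [IsFiniteMeasure b] (x : SM)
    (h : x = a.toSignedMeasure - b.toSignedMeasure) : jp x ≤ a ∧ jn x ≤ b := by
  have hrepr := jordan_repr x
  have heq : a + jn x = jp x + b :=
    measure_add_eq (h ▸ hrepr : a.toSignedMeasure - b.toSignedMeasure =
      (jp x).toSignedMeasure - (jn x).toSignedMeasure)
  constructor
  · exact le_of_add_eq_add x.toJordanDecomposition.mutuallySingular heq.symm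
  · have heq2 : jn x + a = b + jp x := by
      rw [add_comm (jn x) a, add_comm b (jp x)]; exact heq
    exact le_of_add_eq_add x.toJordanDecomposition.mutuallySingular.symm heq2

lemma sInt_eq {a b : Measure EReal} [IsFiniteMeasure a] [IsFiniteMeasure b] {f : EReal → ℝ}
    (x : SM) (h : x = a.toSignedMeasure - b.toSignedMeasure)
    (hfa : Integrable f a) (hfb : Integrable f b) :
    sInt f x = (∫ α, f α ∂a) - ∫ α, f α ∂b := by
  obtain ⟨hpa, hnb⟩ := jordan_le x h
  have heq : a + jn x = jp x + b :=
    measure_add_eq (h ▸ jordan_repr x : a.toSignedMeasure - b.toSignedMeasure =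
      (jp x).toSignedMeasure - (jn x).toSignedMeasure)
  have hfp : Integrable f (jp x) := hfa.mono_measure hpa
  have hfn : Integrable f (jn x) := hfb.mono_measure hnb
  have hint : (∫ α, f α ∂a) + ∫ α, f α ∂(jn x) = (∫ α, f α ∂(jp x)) + ∫ α, f α ∂b := by
    rw [← integral_add_measure hfa hfn, ← integral_add_measure hfp hfb, heq]
  unfold sInt
  linarith

-- Section 7: product integral computation
lemma ae_ne_bot {μ ν : Measure EReal} [IsFiniteMeasure μ] [IsFiniteMeasure ν]
    (hμ : μ {⊥} = 0) (hν : ν {⊥} = 0) :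
    ∀ᵐ p ∂(μ.prod ν), p.1 ≠ ⊥ ∧ p.2 ≠ ⊥ := by
  have h1 : (μ.prod ν) ({(⊥:EReal)} ×ˢ (Set.univ : Set EReal)) = 0 := by
    rw [Measure.prod_prod, hμ, zero_mul]
  have h2 : (μ.prod ν) ((Set.univ : Set EReal) ×ˢ {(⊥:EReal)}) = 0 := by
    rw [Measure.prod_prod, hν, mul_zero]
  rw [eventually_iff, mem_ae_iff]
  refine measure_mono_null ?_ (measure_union_null h1 h2)
  intro p hp
  simp only [Set.mem_compl_iff, Set.mem_setOf_eq, not_and_or, not_not] at hp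
  rcases hp with hp | hp
  · exact Or.inl ⟨hp, trivial⟩
  · exact Or.inr ⟨trivial, hp⟩

lemma conv_check_core {μ ν : Measure EReal} [IsFiniteMeasure μ] [IsFiniteMeasure ν]
    (hμb : μ {⊥} = 0) (hνb : ν {⊥} = 0)
    (hμi : Integrable entFn μ) (hνi : Integrable entFn ν) :
    Integrable entFn (mConv μ ν) ∧ Integrable entFn (mCheck μ ν) ∧
    (∫ α, entFn α ∂(mConv μ ν)) + ∫ α, entFn α ∂(mCheck μ ν) =
      (ν Set.univ).toReal * (∫ α, entFn α ∂μ) +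
        (μ Set.univ).toReal * ∫ α, entFn α ∂ν := by
  have hasm : ∀ m : Measure EReal, AEStronglyMeasurable entFn m :=
    fun m => measurable_entFn.aestronglyMeasurable
  have hae := ae_ne_bot hμb hνb
  have g1 : Integrable (fun p : EReal × EReal => entFn p.1) (μ.prod ν) := by
    have hsm : Integrable entFn ((μ.prod ν).map Prod.fst) := by
      rw [Measure.map_fst_prod]; exact hμi.smul_measure (measure_ne_top ν _)
    exact (integrable_map_measure (hasm _) measurable_fst.aemeasurable).mp hsm
  have g2 : Integrable (fun p : EReal × EReal => entFn p.2) (μ.prod ν) := by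
    have hsm : Integrable entFn ((μ.prod ν).map Prod.snd) := by
      rw [Measure.map_snd_prod]; exact hνi.smul_measure (measure_ne_top μ _)
    exact (integrable_map_measure (hasm _) measurable_snd.aemeasurable).mp hsm
  have gsum : Integrable (fun p : EReal × EReal => entFn p.1 + entFn p.2) (μ.prod ν) :=
    g1.add g2
  have hbc : ∀ᵐ p ∂(μ.prod ν), ‖entFn (p.1 + p.2)‖ ≤ entFn p.1 + entFn p.2 := by
    filter_upwards [hae] with p hp
    rw [Real.norm_of_nonneg (entFn_nonneg _)]
    have hk := key_identity hp.1 hp.2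
    have := entFn_nonneg (atanhTwo (tanhHalf p.1 * tanhHalf p.2))
    linarith
  have hbk : ∀ᵐ p ∂(μ.prod ν),
      ‖entFn (atanhTwo (tanhHalf p.1 * tanhHalf p.2))‖ ≤ entFn p.1 + entFn p.2 := by
    filter_upwards [hae] with p hp
    rw [Real.norm_of_nonneg (entFn_nonneg _)]
    have hk := key_identity hp.1 hp.2
    have := entFn_nonneg (p.1 + p.2)
    linarith
  have hconvP : Integrable (fun p : EReal × EReal => entFn (p.1 + p.2)) (μ.prod ν) :=
    gsum.mono' (measurable_entFn.comp measurable_add2).aestronglyMeasurable hbc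
  have hchkP : Integrable
      (fun p : EReal × EReal => entFn (atanhTwo (tanhHalf p.1 * tanhHalf p.2)))
      (μ.prod ν) :=
    gsum.mono' (measurable_entFn.comp measurable_check2).aestronglyMeasurable hbk
  have hconvI : Integrable entFn (mConv μ ν) := by
    unfold mConv
    exact (integrable_map_measure (hasm _) measurable_add2.aemeasurable).mpr hconvP
  have hchkI : Integrable entFn (mCheck μ ν) := by
    unfold mCheck
    exact (integrable_map_measure (hasm _) measurable_check2.aemeasurable).mpr hchkP
  refine ⟨hconvI, hchkI, ?_⟩
  have e1 : (∫ α, entFn α ∂(mConv μ ν)) =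
      ∫ p, entFn (p.1 + p.2) ∂(μ.prod ν) := by
    unfold mConv
    exact integral_map measurable_add2.aemeasurable (hasm _)
  have e2 : (∫ α, entFn α ∂(mCheck μ ν)) =
      ∫ p, entFn (atanhTwo (tanhHalf p.1 * tanhHalf p.2)) ∂(μ.prod ν) := by
    unfold mCheck
    exact integral_map measurable_check2.aemeasurable (hasm _)
  have e3 : (∫ p, entFn (p.1 + p.2) ∂(μ.prod ν)) +
      ∫ p, entFn (atanhTwo (tanhHalf p.1 * tanhHalf p.2)) ∂(μ.prod ν) =
      ∫ p, (entFn p.1 + entFn p.2) ∂(μ.prod ν) := by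
    rw [← integral_add hconvP hchkP]
    apply integral_congr_ae
    filter_upwards [hae] with p hp
    exact key_identity hp.1 hp.2
  have e4 : (∫ p, (entFn p.1 + entFn p.2) ∂(μ.prod ν)) =
      (ν Set.univ).toReal * (∫ α, entFn α ∂μ) +
        (μ Set.univ).toReal * ∫ α, entFn α ∂ν := by
    rw [integral_add g1 g2]
    have f1 : (∫ p : EReal × EReal, entFn p.1 ∂(μ.prod ν)) =
        (ν Set.univ).toReal * ∫ α, entFn α ∂μ := by
      rw [← integral_map measurable_fst.aemeasurable (hasm _), Measure.map_fst_prod,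
        integral_smul_measure]
      rfl
    have f2 : (∫ p : EReal × EReal, entFn p.2 ∂(μ.prod ν)) =
        (μ Set.univ).toReal * ∫ α, entFn α ∂ν := by
      rw [← integral_map measurable_snd.aemeasurable (hasm _), Measure.map_snd_prod,
        integral_smul_measure]
      rfl
    rw [f1, f2]
  rw [e1, e2, e3, e4]

/-- Extract the useful data from membership in `X`. -/
lemma memX_data {x : SM} (h : MemX x) :
    ∃ μ : Measure EReal, ∃ _ : IsProbabilityMeasure μ,
      x = μ.toSignedMeasure ∧ μ {⊥} = 0 ∧ Integrable entFn μ := by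
  obtain ⟨⟨μ, hP, hx⟩, hsymm⟩ := h
  haveI := hP
  have hx' : x = μ.toSignedMeasure := hx
  have hjp : jp x = μ := by rw [hx']; exact (jordan_of_toSM μ).1
  have hsm : IsSymmMeasure μ := hjp ▸ hsymm.1
  have hwt : ∫⁻ α, wt α ∂μ < ⊤ := symm_wt_lt_top hsm
  exact ⟨μ, hP, hx', bot_eq_zero_of_wt_lt_top hwt, entFn_integrable_of_wt hwt⟩


/-- For all symmetric probability measures `x1, x2, x3, x4 ∈ X`,
`H((x1 - x2) ⊛ (x3 - x4)) + H((x1 - x2) ⊠ (x3 - x4)) = 0`. -/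
theorem entropy_duality_double_difference
    (x1 x2 x3 x4 : SM) (h1 : MemX x1) (h2 : MemX x2) (h3 : MemX x3) (h4 : MemX x4) :
    H (sConv (x1 - x2) (x3 - x4)) + H (sCheck (x1 - x2) (x3 - x4)) = 0 := by
  obtain ⟨μ1, hP1, hx1, hb1, hi1⟩ := memX_data h1
  obtain ⟨μ2, hP2, hx2, hb2, hi2⟩ := memX_data h2
  obtain ⟨μ3, hP3, hx3, hb3, hi3⟩ := memX_data h3
  obtain ⟨μ4, hP4, hx4, hb4, hi4⟩ := memX_data h4
  haveI := hP1; haveI := hP2; haveI := hP3; haveI := hP4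
  have hy : x1 - x2 = μ1.toSignedMeasure - μ2.toSignedMeasure := by rw [hx1, hx2]
  have hz : x3 - x4 = μ3.toSignedMeasure - μ4.toSignedMeasure := by rw [hx3, hx4]
  set P1 := jp (x1 - x2) with hP1def
  set N1 := jn (x1 - x2) with hN1def
  set P2 := jp (x3 - x4) with hP2def
  set N2 := jn (x3 - x4) with hN2def
  obtain ⟨hP1le, hN1le⟩ := jordan_le (x1 - x2) hy
  obtain ⟨hP2le, hN2le⟩ := jordan_le (x3 - x4) hz
  have heq1 : μ1 + N1 = P1 + μ2 := measure_add_eq (hy.symm.trans (jordan_repr (x1 - x2)))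
  have heq2 : μ3 + N2 = P2 + μ4 := measure_add_eq (hz.symm.trans (jordan_repr (x3 - x4)))
  -- no mass at ⊥ and integrability for the Jordan parts
  have hbP1 : P1 {⊥} = 0 := le_antisymm (le_trans (hP1le _) (le_of_eq hb1)) (zero_le)
  have hbN1 : N1 {⊥} = 0 := le_antisymm (le_trans (hN1le _) (le_of_eq hb2)) (zero_le)
  have hbP2 : P2 {⊥} = 0 := le_antisymm (le_trans (hP2le _) (le_of_eq hb3)) (zero_le)
  have hbN2 : N2 {⊥} = 0 := le_antisymm (le_trans (hN2le _) (le_of_eq hb4)) (zero_le)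
  have hiP1 : Integrable entFn P1 := hi1.mono_measure hP1le
  have hiN1 : Integrable entFn N1 := hi2.mono_measure hN1le
  have hiP2 : Integrable entFn P2 := hi3.mono_measure hP2le
  have hiN2 : Integrable entFn N2 := hi4.mono_measure hN2le
  -- equal masses
  have hm1 : (P1 Set.univ).toReal = (N1 Set.univ).toReal := by
    have h := congrArg (fun m : Measure EReal => m Set.univ) heq1
    simp only [Measure.add_apply, measure_univ] at h
    rw [add_comm (P1 Set.univ) 1] at h
    exact (congrArg ENNReal.toReal ((ENNReal.add_right_inj ENNReal.one_ne_top).mp h)).symm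
  have hm2 : (P2 Set.univ).toReal = (N2 Set.univ).toReal := by
    have h := congrArg (fun m : Measure EReal => m Set.univ) heq2
    simp only [Measure.add_apply, measure_univ] at h
    rw [add_comm (P2 Set.univ) 1] at h
    exact (congrArg ENNReal.toReal ((ENNReal.add_right_inj ENNReal.one_ne_top).mp h)).symm
  -- the four core identities
  obtain ⟨icPP, ikPP, ePP⟩ := conv_check_core hbP1 hbP2 hiP1 hiP2
  obtain ⟨icPN, ikPN, ePN⟩ := conv_check_core hbP1 hbN2 hiP1 hiN2
  obtain ⟨icNP, ikNP, eNP⟩ := conv_check_core hbN1 hbP2 hiN1 hiP2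
  obtain ⟨icNN, ikNN, eNN⟩ := conv_check_core hbN1 hbN2 hiN1 hiN2
  -- rewrite the two H terms
  have hconv : sConv (x1 - x2) (x3 - x4) =
      (mConv P1 P2 + mConv N1 N2).toSignedMeasure -
        (mConv P1 N2 + mConv N1 P2).toSignedMeasure := by
    unfold sConv
    rw [Measure.toSignedMeasure_add, Measure.toSignedMeasure_add]
    abel
  have hchk : sCheck (x1 - x2) (x3 - x4) =
      (mCheck P1 P2 + mCheck N1 N2).toSignedMeasure -
        (mCheck P1 N2 + mCheck N1 P2).toSignedMeasure := by
    unfold sCheck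
    rw [Measure.toSignedMeasure_add, Measure.toSignedMeasure_add]
    abel
  have hHconv : H (sConv (x1 - x2) (x3 - x4)) =
      ((∫ α, entFn α ∂(mConv P1 P2)) + ∫ α, entFn α ∂(mConv N1 N2)) -
        ((∫ α, entFn α ∂(mConv P1 N2)) + ∫ α, entFn α ∂(mConv N1 P2)) := by
    unfold H
    rw [sInt_eq _ hconv (icPP.add_measure icNN) (icPN.add_measure icNP),
      integral_add_measure icPP icNN, integral_add_measure icPN icNP]
  have hHchk : H (sCheck (x1 - x2) (x3 - x4)) =
      ((∫ α, entFn α ∂(mCheck P1 P2)) + ∫ α, entFn α ∂(mCheck N1 N2)) -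
        ((∫ α, entFn α ∂(mCheck P1 N2)) + ∫ α, entFn α ∂(mCheck N1 P2)) := by
    unfold H
    rw [sInt_eq _ hchk (ikPP.add_measure ikNN) (ikPN.add_measure ikNP),
      integral_add_measure ikPP ikNN, integral_add_measure ikPN ikNP]
  rw [hHconv, hHchk]
  rw [hm1] at ePP ePN
  rw [hm2] at ePP eNP
  linarith

end SCLDPC
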